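/- arXiv:nlin/0512012 — 4 statements merged into one kernel-verified Lean document; each statement's English description precedes it below -/
import Mathlib

section
/- Let y : ℝ → ℝ be three times differentiable with y'(x) > 0 for all x, and let k ∈ ℝ. If y'(x)·y'''(x) − (1/2)·(y''(x))² = k for all x, then the function w(x) = √(y'(x)) satisfies w''(x) = k / (2·w(x)³) for all x: the first integral of y⁽⁴⁾ = 0 obtained from the integrating factor y' is a variation of the Ermakov–Pinney equation in the variable (y')^{1/2}. -/
/-- If `y` is three times differentiable with `y' > 0` and satisfies the first
integral `y' y''' - ½ (y'')² = k` of `y⁽⁴⁾ = 0`, then `w = √(y')` satisfies the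
Ermakov–Pinney type equation `w'' = k / (2 w³)`. -/
theorem sqrt_deriv_satisfies_ermakov_pinney
    (y : ℝ → ℝ) (hy : ∀ j < 3, Differentiable ℝ (iteratedDeriv j y))
    (hpos : ∀ x, 0 < iteratedDeriv 1 y x) (k : ℝ)
    (hI : ∀ x, iteratedDeriv 1 y x * iteratedDeriv 3 y x
        - (1 / 2) * (iteratedDeriv 2 y x) ^ 2 = k)
    (x : ℝ) :
    iteratedDeriv 2 (fun t : ℝ => Real.sqrt (iteratedDeriv 1 y t)) x
      = k / (2 * (Real.sqrt (iteratedDeriv 1 y x)) ^ 3) := by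
  set u : ℝ → ℝ := iteratedDeriv 1 y with hu
  have hu1 : Differentiable ℝ u := hy 1 (by norm_num)
  have hu2 : Differentiable ℝ (deriv u) := by
    have := hy 2 (by norm_num)
    rwa [iteratedDeriv_succ] at this
  have h3 : ∀ t, iteratedDeriv 3 y t = deriv (deriv u) t := by
    intro t
    rw [show (3:ℕ) = 2 + 1 from rfl, iteratedDeriv_succ, iteratedDeriv_succ]
  have h2 : ∀ t, iteratedDeriv 2 y t = deriv u t := by
    intro t
    rw [show (2:ℕ) = 1 + 1 from rfl, iteratedDeriv_succ]
  -- first derivative of sqrt ∘ u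
  have hW : ∀ t, HasDerivAt (fun s => Real.sqrt (u s))
      (deriv u t / (2 * Real.sqrt (u t))) t := by
    intro t
    have h : HasDerivAt (fun s => Real.sqrt (u s)) (1 / (2 * Real.sqrt (u t)) * deriv u t) t :=
      (Real.hasDerivAt_sqrt (ne_of_gt (hpos t))).comp t (hu1 t).hasDerivAt
    convert h using 1
    ring
  have hderiv1 : deriv (fun s => Real.sqrt (u s))
      = fun t => deriv u t / (2 * Real.sqrt (u t)) := by
    funext t; exact (hW t).deriv
  rw [iteratedDeriv_succ, iteratedDeriv_one]
  rw [show deriv (fun t : ℝ => Real.sqrt (iteratedDeriv 1 y t))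
      = fun t => deriv u t / (2 * Real.sqrt (u t)) from hderiv1]
  have hsq : 0 < Real.sqrt (u x) := Real.sqrt_pos.mpr (hpos x)
  have hden : (2 : ℝ) * Real.sqrt (u x) ≠ 0 := by positivity
  have hD : HasDerivAt (fun t => deriv u t / (2 * Real.sqrt (u t)))
      ((deriv (deriv u) x * (2 * Real.sqrt (u x)) -
        deriv u x * (2 * (deriv u x / (2 * Real.sqrt (u x))))) /
        (2 * Real.sqrt (u x)) ^ 2) x := by
    exact (hu2 x).hasDerivAt.div (((hW x)).const_mul 2) hden
  rw [hD.deriv]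
  have hk := hI x
  rw [h2, h3] at hk
  have husq : Real.sqrt (u x) ^ 2 = u x := Real.sq_sqrt (hpos x).le
  have hsne : Real.sqrt (u x) ≠ 0 := ne_of_gt hsq
  have h3s : Real.sqrt (u x) ^ 3 = u x * Real.sqrt (u x) := by
    rw [pow_succ, husq]
  field_simp
  rw [husq]
  linear_combination 2 * hk
end

section
/- Let n ≥ 1 and let y : ℝ → ℝ be n times continuously differentiable with y⁽ⁿ⁾(x) = 0 for all x. Then for each i with 0 ≤ i ≤ n−1, the function x ↦ Σ_{j=0}^{n−i−1} (−1)ʲ · x^{n−j−i−1}/(n−j−i−1)! · y⁽ⁿ⁻ʲ⁻¹⁾(x) is constant on ℝ. (These are the fundamental first integrals I_{n,i} of the equation of maximal symmetry y⁽ⁿ⁾ = 0.) -/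
private lemma iterDeriv_hasDerivAt {n m : ℕ} {y : ℝ → ℝ} (hy : ContDiff ℝ (n : ℕ∞) y)
    (hm : m < n) (x : ℝ) :
    HasDerivAt (iteratedDeriv m y) (iteratedDeriv (m + 1) y x) x := by
  have hd : Differentiable ℝ (iteratedDeriv m y) :=
    hy.differentiable_iteratedDeriv m (by exact_mod_cast hm)
  have := (hd x).hasDerivAt
  rwa [iteratedDeriv_succ]

private lemma key_hasDerivAt {n i : ℕ} {y : ℝ → ℝ} (hy : ContDiff ℝ (n : ℕ∞) y)
    (N : ℕ) (hN : 1 ≤ N) (hiN : i + N ≤ n) (x : ℝ) :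
    HasDerivAt (fun x => ∑ l ∈ Finset.range N,
        (-1 : ℝ) ^ l * x ^ l / (Nat.factorial l) * iteratedDeriv (i + l) y x)
      ((-1 : ℝ) ^ (N - 1) * x ^ (N - 1) / (Nat.factorial (N - 1))
        * iteratedDeriv (i + N) y x) x := by
  induction N, hN using Nat.le_induction with
  | base =>
    simp only [Finset.sum_range_one, pow_zero, Nat.factorial_zero, Nat.cast_one, one_mul,
      div_one]
    have h := iterDeriv_hasDerivAt hy (by omega : i < n) x
    simpa using h
  | succ N hN ih =>
    have hiN' : i + N ≤ n := by omega
    have ih' := ih hiN'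
    have hterm : HasDerivAt
        (fun x => (-1 : ℝ) ^ N * x ^ N / (Nat.factorial N) * iteratedDeriv (i + N) y x)
        (((-1 : ℝ) ^ N / (Nat.factorial N)) * (N * x ^ (N - 1)) * iteratedDeriv (i + N) y x
          + (-1 : ℝ) ^ N * x ^ N / (Nat.factorial N) * iteratedDeriv (i + N + 1) y x) x := by
      have hpow : HasDerivAt (fun x : ℝ => (-1 : ℝ) ^ N * x ^ N / (Nat.factorial N))
          (((-1 : ℝ) ^ N / (Nat.factorial N)) * (N * x ^ (N - 1))) x := by
        have := (hasDerivAt_pow N x).const_mul ((-1 : ℝ) ^ N / (Nat.factorial N))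
        convert this using 2 with x
        · rfl
        · rfl
        ring_nf
      exact hpow.mul (iterDeriv_hasDerivAt hy (by omega : i + N < n) x)
    have hsum := ih'.add hterm
    have heq : (fun x => ∑ l ∈ Finset.range (N + 1),
        (-1 : ℝ) ^ l * x ^ l / (Nat.factorial l) * iteratedDeriv (i + l) y x)
      = fun x => (∑ l ∈ Finset.range N,
          (-1 : ℝ) ^ l * x ^ l / (Nat.factorial l) * iteratedDeriv (i + l) y x)
        + (-1 : ℝ) ^ N * x ^ N / (Nat.factorial N) * iteratedDeriv (i + N) y x := by
      funext x
      rw [Finset.sum_range_succ]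
    rw [heq]
    convert hsum using 1
    · rfl
    · rfl
    · rfl
    obtain ⟨M, rfl⟩ : ∃ M, N = M + 1 := ⟨N - 1, by omega⟩
    simp only [Nat.add_sub_cancel, Nat.factorial_succ, Nat.cast_mul, Nat.cast_add,
      Nat.cast_one, pow_succ]
    have hM : (Nat.factorial M : ℝ) ≠ 0 := by positivity
    have hM1 : ((M : ℝ) + 1) ≠ 0 := by positivity
    field_simp
    ring

/-- The fundamental first integrals `I_{n,i}` of the equation of maximal symmetry
`y⁽ⁿ⁾ = 0`: if `y` is `n` times continuously differentiable with `y⁽ⁿ⁾ ≡ 0`, then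
for each `0 ≤ i ≤ n-1` the function
`x ↦ Σ_{j=0}^{n-i-1} (-1)ʲ x^{n-j-i-1}/(n-j-i-1)! · y⁽ⁿ⁻ʲ⁻¹⁾(x)` is constant. -/
theorem fundamental_first_integrals_constant
    (n : ℕ) (hn : 1 ≤ n) (y : ℝ → ℝ) (hy : ContDiff ℝ (n : ℕ∞) y)
    (hmax : ∀ x, iteratedDeriv n y x = 0)
    (i : ℕ) (hi : i ≤ n - 1) (a b : ℝ) :
    (∑ j ∈ Finset.range (n - i),
        (-1 : ℝ) ^ j * a ^ (n - j - i - 1) / (Nat.factorial (n - j - i - 1))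
          * iteratedDeriv (n - j - 1) y a)
      = ∑ j ∈ Finset.range (n - i),
        (-1 : ℝ) ^ j * b ^ (n - j - i - 1) / (Nat.factorial (n - j - i - 1))
          * iteratedDeriv (n - j - 1) y b := by
  set N := n - i with hNdef
  have hN : 1 ≤ N := by omega
  have hiN : i + N = n := by omega
  -- the reindexed function
  set G : ℝ → ℝ := fun x => ∑ l ∈ Finset.range N,
      (-1 : ℝ) ^ l * x ^ l / (Nat.factorial l) * iteratedDeriv (i + l) y x with hG
  have hG0 : ∀ x, HasDerivAt G 0 x := by
    intro x
    have h := key_hasDerivAt hy N hN (le_of_eq hiN) x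
    rw [hiN, hmax x, mul_zero] at h
    exact h
  have hGconst : G a = G b :=
    is_const_of_deriv_eq_zero (fun x => (hG0 x).differentiableAt)
      (fun x => (hG0 x).deriv) a b
  -- relate the original sum to G
  have hrel : ∀ x : ℝ, (∑ j ∈ Finset.range (n - i),
        (-1 : ℝ) ^ j * x ^ (n - j - i - 1) / (Nat.factorial (n - j - i - 1))
          * iteratedDeriv (n - j - 1) y x) = (-1 : ℝ) ^ (N - 1) * G x := by
    intro x
    rw [hG, Finset.mul_sum, ← Finset.sum_range_reflect]
    apply Finset.sum_congr rfl
    intro j hj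
    simp only [Finset.mem_range] at hj
    have h1 : n - (N - 1 - j) - i - 1 = j := by omega
    have h2 : n - (N - 1 - j) - 1 = i + j := by omega
    rw [h1, h2]
    have hsign : (-1 : ℝ) ^ (N - 1 - j) = (-1 : ℝ) ^ (N - 1) * (-1 : ℝ) ^ j := by
      have harith : (N - 1 - j) + (j + j) = (N - 1) + j := by omega
      have hone : (-1 : ℝ) ^ (j + j) = 1 := by
        rw [← two_mul, pow_mul]; norm_num
      calc (-1 : ℝ) ^ (N - 1 - j) = (-1 : ℝ) ^ ((N - 1 - j) + (j + j)) := by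
            rw [pow_add, hone, mul_one]
        _ = (-1 : ℝ) ^ (N - 1) * (-1 : ℝ) ^ j := by rw [harith, pow_add]
    rw [hsign]
    ring
  rw [hrel a, hrel b, hGconst]
end

section
/- Define J : ℝ⁴ → ℝ by J(x, u₀, u₁, u₂) = u₀·u₂ − (1/2)·u₁², and define the prolonged sl(2,ℝ) operators of y''' = 0 acting on differentiable functions F : ℝ⁴ → ℝ by Λ₁F = ∂F/∂x, Λ₂F = x·∂F/∂x + u₀·∂F/∂u₀ − u₂·∂F/∂u₂, Λ₃F = x²·∂F/∂x + 2x·u₀·∂F/∂u₀ + 2u₀·∂F/∂u₁ + (2u₁ − 2x·u₂)·∂F/∂u₂. Then Λ₁J = 0, Λ₂J = 0 and Λ₃J = 0 identically on ℝ⁴. (The autonomous integral J = y y'' − ½ y'² obtained from the integrating factor y possesses the full sl(2,ℝ) subalgebra.) -/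
/-- The autonomous integral `J = y y'' - ½ y'²` of `y''' = 0`, as a function of
`(x, u₀, u₁, u₂) = (x, y, y', y'')`. -/
noncomputable def autonomousIntegralJ (x u₀ u₁ u₂ : ℝ) : ℝ := u₀ * u₂ - (1 / 2) * u₁ ^ 2

/-- The autonomous integral `J = y y'' - ½ y'²` is annihilated by the (prolonged)
`sl(2,ℝ)` subalgebra `Λ₁ = ∂ₓ`, `Λ₂ = x∂ₓ + u₀∂₀ - u₂∂₂`,
`Λ₃ = x²∂ₓ + 2xu₀∂₀ + 2u₀∂₁ + (2u₁ - 2xu₂)∂₂`. -/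
theorem sl2_annihilates_autonomous_integral :
    ∀ x u₀ u₁ u₂ : ℝ,
      deriv (fun t => autonomousIntegralJ t u₀ u₁ u₂) x = 0 ∧
      x * deriv (fun t => autonomousIntegralJ t u₀ u₁ u₂) x
        + u₀ * deriv (fun s => autonomousIntegralJ x s u₁ u₂) u₀
        - u₂ * deriv (fun s => autonomousIntegralJ x u₀ u₁ s) u₂ = 0 ∧
      x ^ 2 * deriv (fun t => autonomousIntegralJ t u₀ u₁ u₂) x
        + 2 * x * u₀ * deriv (fun s => autonomousIntegralJ x s u₁ u₂) u₀
        + 2 * u₀ * deriv (fun s => autonomousIntegralJ x u₀ s u₂) u₁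
        + (2 * u₁ - 2 * x * u₂) * deriv (fun s => autonomousIntegralJ x u₀ u₁ s) u₂
          = 0 := by
  intro x u₀ u₁ u₂
  have hx : deriv (fun t => autonomousIntegralJ t u₀ u₁ u₂) x = 0 := by
    simp [autonomousIntegralJ]
  have h0 : deriv (fun s => autonomousIntegralJ x s u₁ u₂) u₀ = u₂ := by
    simp [autonomousIntegralJ]
  have h1 : deriv (fun s => autonomousIntegralJ x u₀ s u₂) u₁ = -u₁ := by
    simp only [autonomousIntegralJ]
    rw [deriv_fun_sub (by fun_prop) (by fun_prop)]
    simp [deriv_pow_field]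
  have h2 : deriv (fun s => autonomousIntegralJ x u₀ u₁ s) u₂ = u₀ := by
    have : HasDerivAt (fun s => autonomousIntegralJ x u₀ u₁ s) u₀ u₂ := by
      simpa [autonomousIntegralJ] using
        (((hasDerivAt_id u₂).const_mul u₀).sub_const ((1 / 2 : ℝ) * u₁ ^ 2))
    exact this.deriv
  refine ⟨hx, ?_, ?_⟩ <;> simp only [hx, h0, h1, h2] <;> ring
end

section
/- Let n ≥ 1. For 0 ≤ i ≤ n−1 define F_{n,i} : ℝ × ℝⁿ → ℝ by F_{n,i}(x, u) = Σ_{j=0}^{n−i−1} (−1)ʲ · x^{n−j−i−1}/(n−j−i−1)! · u_{n−j−1}. Then for every i with 0 ≤ i ≤ n−1 and every (x,u) ∈ ℝ × ℝⁿ, x·∂F_{n,i}/∂x + Σ_{k=0}^{n−1} (1−k)·u_k·∂F_{n,i}/∂u_k = (1−i)·F_{n,i}(x,u). (This is the action Λ₂ I_{n,i} = (1−i) I_{n,i} of the prolonged symmetry Λ₂ = x∂ₓ + y∂_y on the fundamental first integrals of y⁽ⁿ⁾ = 0.) -/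
/-- The prolonged symmetry `Λ₂ = x∂ₓ + Σₖ (1-k)uₖ∂ₖ` acts on the fundamental first
integral `I_{n,i}` of `y⁽ⁿ⁾ = 0` as multiplication by `(1-i)`: with
`F_{n,i}(x,u) = Σ_{j=0}^{n-i-1} (-1)ʲ x^{n-j-i-1}/(n-j-i-1)! · u_{n-j-1}`,
`x·∂F/∂x + Σ_{k=0}^{n-1} (1-k)·uₖ·∂F/∂uₖ = (1-i)·F`. -/
theorem lambda2_action_on_fundamental_integral
    (n : ℕ) (hn : 1 ≤ n) (i : ℕ) (hi : i ≤ n - 1) (x : ℝ) (u : Fin n → ℝ) :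
    (let F : ℝ → (Fin n → ℝ) → ℝ := fun t v => ∑ j ∈ Finset.range (n - i),
        (-1 : ℝ) ^ j * t ^ (n - j - i - 1) / (Nat.factorial (n - j - i - 1))
          * v ⟨n - j - 1, by omega⟩
     x * deriv (fun t => F t u) x
        + ∑ k : Fin n, ((1 : ℝ) - (k : ℕ)) * u k
            * deriv (fun s => F x (Function.update u k s)) (u k)
      = ((1 : ℝ) - i) * F x u) := by
  intro F
  -- derivative in t
  have hd1 : HasDerivAt (fun t => F t u)
      (∑ j ∈ Finset.range (n - i),
        (-1 : ℝ) ^ j * (((n - j - i - 1 : ℕ) : ℝ) * x ^ (n - j - i - 1 - 1)) / (Nat.factorial (n - j - i - 1))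
          * u ⟨n - j - 1, by omega⟩) x := by
    apply HasDerivAt.fun_sum
    intro j hj
    exact (((hasDerivAt_pow (n - j - i - 1) x).const_mul ((-1 : ℝ) ^ j)).div_const
      (Nat.factorial (n - j - i - 1))).mul_const _
  -- derivative in u k
  have hd2 : ∀ k : Fin n, HasDerivAt (fun s => F x (Function.update u k s))
      (∑ j ∈ Finset.range (n - i),
        if (⟨n - j - 1, by omega⟩ : Fin n) = k then
          (-1 : ℝ) ^ j * x ^ (n - j - i - 1) / (Nat.factorial (n - j - i - 1)) else 0) (u k) := by
    intro k
    apply HasDerivAt.fun_sum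
    intro j hj
    by_cases h : (⟨n - j - 1, by omega⟩ : Fin n) = k
    · simp only [if_pos h]
      have he : (fun s => (-1 : ℝ) ^ j * x ^ (n - j - i - 1) / (Nat.factorial (n - j - i - 1))
            * Function.update u k s ⟨n - j - 1, by omega⟩)
          = fun s => (-1 : ℝ) ^ j * x ^ (n - j - i - 1) / (Nat.factorial (n - j - i - 1)) * s := by
        funext s; rw [h, Function.update_self]
      rw [he]
      simpa using (hasDerivAt_id (u k)).const_mul
        ((-1 : ℝ) ^ j * x ^ (n - j - i - 1) / (Nat.factorial (n - j - i - 1)))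
    · simp only [if_neg h]
      have he : (fun s => (-1 : ℝ) ^ j * x ^ (n - j - i - 1) / (Nat.factorial (n - j - i - 1))
            * Function.update u k s ⟨n - j - 1, by omega⟩)
          = fun _ => (-1 : ℝ) ^ j * x ^ (n - j - i - 1) / (Nat.factorial (n - j - i - 1))
            * u ⟨n - j - 1, by omega⟩ := by
        funext s; rw [Function.update_of_ne h]
      rw [he]; exact hasDerivAt_const _ _
  rw [hd1.deriv]
  have hrw : ∀ k : Fin n, deriv (fun s => F x (Function.update u k s)) (u k)
      = ∑ j ∈ Finset.range (n - i),
        if (⟨n - j - 1, by omega⟩ : Fin n) = k then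
          (-1 : ℝ) ^ j * x ^ (n - j - i - 1) / (Nat.factorial (n - j - i - 1)) else 0 :=
    fun k => (hd2 k).deriv
  simp only [hrw]
  -- swap sums and collapse the if
  have hswap : ∑ k : Fin n, ((1 : ℝ) - (k : ℕ)) * u k
      * ∑ j ∈ Finset.range (n - i),
        (if (⟨n - j - 1, by omega⟩ : Fin n) = k then
          (-1 : ℝ) ^ j * x ^ (n - j - i - 1) / (Nat.factorial (n - j - i - 1)) else 0)
      = ∑ j ∈ Finset.range (n - i),
        ((1 : ℝ) - ((n - j - 1 : ℕ) : ℝ)) * u ⟨n - j - 1, by omega⟩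
          * ((-1 : ℝ) ^ j * x ^ (n - j - i - 1) / (Nat.factorial (n - j - i - 1))) := by
    simp only [Finset.mul_sum, mul_ite, mul_zero]
    rw [Finset.sum_comm]
    refine Finset.sum_congr rfl fun j hj => ?_
    rw [Fintype.sum_ite_eq (⟨n - j - 1, by omega⟩ : Fin n)
      (fun k => ((1 : ℝ) - (k : ℕ)) * u k
        * ((-1 : ℝ) ^ j * x ^ (n - j - i - 1) / (Nat.factorial (n - j - i - 1))))]
  rw [hswap]
  show _ = ((1 : ℝ) - i) * ∑ j ∈ Finset.range (n - i),
      (-1 : ℝ) ^ j * x ^ (n - j - i - 1) / (Nat.factorial (n - j - i - 1))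
        * u ⟨n - j - 1, by omega⟩
  rw [Finset.mul_sum, Finset.mul_sum, ← Finset.sum_add_distrib]
  refine Finset.sum_congr rfl fun j hj => ?_
  simp only [Finset.mem_range] at hj
  have hji : j + i + 1 ≤ n := by omega
  set m := n - j - i - 1 with hm
  have hnm : n - j - 1 = m + i := by omega
  have hc : ((n - j - 1 : ℕ) : ℝ) = (m : ℝ) + i := by rw [hnm]; push_cast; ring
  rcases Nat.eq_zero_or_pos m with h0 | hpos
  · rw [hc, h0]
    simp only [Nat.cast_zero, pow_zero]
    ring
  · have hx : x ^ m = x ^ (m - 1) * x := by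
      have hm1 : m - 1 + 1 = m := by omega
      rw [← pow_succ, hm1]
    rw [hc, hx]
    ring
end
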